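/- arXiv:2006.03862 — 2 statements merged into one kernel-verified Lean document; each statement's English description precedes it below -/
import Mathlib

section
/- Let Π = (X,U,F,G,g) be the two-phase reach-avoid problem on transition system S = (X,U,F) associated with nonempty sets A₁, A₂ ⊆ X and G₀ : X → [0,∞], with closed-loop performance L. Let (X',U',F') be a transition system satisfying: (i) X' is a cover of X by nonempty subsets of X; (ii) U' ⊆ U; (iii) for x ∈ Ω ∈ X', Ω' ∈ X', u ∈ U': if Ω' ∩ (⋃_{y∈Ω} F(y,u)) ≠ ∅ then Ω' ∈ F'(Ω,u). Let A'ᵢ = {Ω ∈ X' : Ω ⊆ Aᵢ} for i ∈ {1,2}, assume A'₁, A'₂ nonempty, let G₀' : X' → [0,∞] satisfy G₀'(Ω) ≥ sup_{x∈Ω} G₀(x), and let g' : X' × X' × U' → [0,∞] satisfy g(x,x',u) ≤ g'(Ω,Ω',u) whenever x ∈ Ω ∈ X', x' ∈ Ω' ∈ X', u ∈ U'. Let Π' = (X',U',F',G',g') be the two-phase reach-avoid problem associated with A'₁, A'₂, G₀', with value function V'. Let μ₂' be a memoryless controller optimal for the reach-avoid problem Π₂' = (X',U',F',G₂',g') associated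 with A'₂ and G₀', with closed-loop performance L₂'; let μ₁' be a memoryless controller with single-valued stopping component optimal for the reach-avoid problem Π₁' associated with A'₁ and terminal cost L₂'(·,μ₂'). Let Q : X → Set X' be the quantizer (Ω ∈ Q(p) ⟺ p ∈ Ω), and let μ_Q be the controller that applies μ₁'∘Q until the stopping signal of μ₁'∘Q first equals 1 and applies μ₂'∘Q thereafter. Then L(p, μ_Q) ≤ sup{ V'(Ω) : Ω ∈ X', p ∈ Ω } for all p ∈ X. -/
open scoped ENNReal Classical

namespace TwoPhase

noncomputable section

variable {X U : Type*}

/-- The behaviour of the transition system `(X, U, F)` initialized at `p`: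
`x 0 = p` and `x (t+1) ∈ F (x t) (u t)` for all `t`. -/
def Behaviour (F : X → U → Set X) (p : X) (u : ℕ → U) (x : ℕ → X) : Prop :=
  x 0 = p ∧ ∀ t, x (t + 1) ∈ F (x t) (u t)

/-- A general (history-dependent) controller, encoded as a map depending on the
time `t` and the full signals, required to be strict (nonempty valued) and causal:
its value at time `t` only depends on `x|[0;t]` and `u|[0;t)`. -/
def IsController (μ : ℕ → (ℕ → X) → (ℕ → U) → Set (U × Bool)) : Prop :=
  (∀ t x u, (μ t x u).Nonempty) ∧
    ∀ (t : ℕ) (x x' : ℕ → X) (u u' : ℕ → U),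
      (∀ s ≤ t, x s = x' s) → (∀ s < t, u s = u' s) → μ t x u = μ t x' u'

/-- The history-dependent controller induced by a memoryless controller. -/
def ofMemoryless (μ : X → Set (U × Bool)) : ℕ → (ℕ → X) → (ℕ → U) → Set (U × Bool) :=
  fun t x _ => μ (x t)

/-- The closed-loop behaviour `B_p(μ × S)`. -/
def ClosedLoop (F : X → U → Set X) (μ : ℕ → (ℕ → X) → (ℕ → U) → Set (U × Bool))
    (p : X) (u : ℕ → U) (v : ℕ → Bool) (x : ℕ → X) : Prop :=
  Behaviour F p u x ∧ ∀ t, (u t, v t) ∈ μ t x u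

/-- The total cost `J(u,v,x)` associated with running cost `g` and
trajectory cost `G` (where `G T x` is the cost of the finite trajectory `x|[0;T]`):
if `v` is not identically `0` and `T = min v⁻¹(1)`, it is
`∑_{t<T} g (x t) (x (t+1)) (u t) + G T x`; otherwise it is `∞`. -/
def totalCost (g : X → X → U → ℝ≥0∞) (G : ℕ → (ℕ → X) → ℝ≥0∞)
    (u : ℕ → U) (v : ℕ → Bool) (x : ℕ → X) : ℝ≥0∞ :=
  if h : ∃ t, v t = true then
    (∑ t ∈ Finset.range (Nat.find h), g (x t) (x (t + 1)) (u t)) + G (Nat.find h) x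
  else ⊤

/-- The closed-loop performance `L(p, μ)` of the optimal control problem
`(X, U, F, G, g)`. -/
def perf (F : X → U → Set X) (g : X → X → U → ℝ≥0∞) (G : ℕ → (ℕ → X) → ℝ≥0∞)
    (μ : ℕ → (ℕ → X) → (ℕ → U) → Set (U × Bool)) (p : X) : ℝ≥0∞ :=
  ⨆ (u : ℕ → U) (v : ℕ → Bool) (x : ℕ → X) (_ : ClosedLoop F μ p u v x),
    totalCost g G u v x

/-- The value function `V(p)` of the optimal control problem `(X, U, F, G, g)`. -/
def value (F : X → U → Set X) (g : X → X → U → ℝ≥0∞) (G : ℕ → (ℕ → X) → ℝ≥0∞)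
    (p : X) : ℝ≥0∞ :=
  ⨅ (μ : ℕ → (ℕ → X) → (ℕ → U) → Set (U × Bool)) (_ : IsController μ),
    perf F g G μ p

/-- The (terminal) trajectory cost of the reach-avoid problem associated with `A`
and `G₀`. -/
def reachAvoidCost (A : Set X) (G₀ : X → ℝ≥0∞) : ℕ → (ℕ → X) → ℝ≥0∞ :=
  fun T x => if x T ∈ A then G₀ (x T) else ⊤

/-- The trajectory cost of the two-phase reach-avoid problem associated with
`A₁`, `A₂` and `G₀`. -/
def twoPhaseCost (A₁ A₂ : Set X) (G₀ : X → ℝ≥0∞) : ℕ → (ℕ → X) → ℝ≥0∞ :=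
  fun t x => if (∃ s ≤ t, x s ∈ A₁) ∧ x t ∈ A₂ then G₀ (x t) else ⊤

/-- A trajectory cost which is a terminal cost `G : X → [0,∞]`. -/
def termCost (G : X → ℝ≥0∞) : ℕ → (ℕ → X) → ℝ≥0∞ := fun T x => G (x T)

/-- The stopping component of a memoryless controller is single-valued. -/
def SVStop (μ : X → Set (U × Bool)) : Prop :=
  ∀ q : X, (∀ w ∈ μ q, w.2 = false) ∨ (∀ w ∈ μ q, w.2 = true)

/-- The composed controller `μ` of Proposition 1: it plays `μ₁` as long as the
stopping signal `w` of `μ₁` along `x` satisfies `w s = 0` for all `s ∈ [0;t]`,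
and plays `μ₂` afterwards. -/
def composed (μ₁ μ₂ : X → Set (U × Bool)) :
    ℕ → (ℕ → X) → (ℕ → U) → Set (U × Bool) :=
  fun t x _ =>
    if ∀ s ≤ t, ∀ w ∈ μ₁ (x s), w.2 = false then μ₁ (x t) else μ₂ (x t)

/-- The refined controller `μ' ∘ Q` of a memoryless abstract controller `μ'`,
where `Q` is the quantizer: `(μ' ∘ Q) p = ⋃_{Ω ∈ X', p ∈ Ω} μ' Ω`. -/
def refineCtrl {XA : Set (Set X)} {UA : Set U} (μ' : ↥XA → Set (↥UA × Bool)) :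
    X → Set (U × Bool) :=
  fun p => ⋃ (Ω : ↥XA) (_ : p ∈ (Ω : Set X)),
    (fun w : ↥UA × Bool => ((w.1 : U), w.2)) '' μ' Ω

end

end TwoPhase

namespace TwoPhase
noncomputable section
open Classical Function
variable {X U : Type*}

lemma le_perf {F : X → U → Set X} {g : X → X → U → ℝ≥0∞} {G : ℕ → (ℕ → X) → ℝ≥0∞}
    {μ : ℕ → (ℕ → X) → (ℕ → U) → Set (U × Bool)} {p : X} {u : ℕ → U} {v : ℕ → Bool}
    {x : ℕ → X} (h : ClosedLoop F μ p u v x) :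
    totalCost g G u v x ≤ perf F g G μ p :=
  le_iSup_of_le u <| le_iSup_of_le v <| le_iSup_of_le x <| le_iSup_of_le h le_rfl

lemma totalCost_congr {g : X → X → U → ℝ≥0∞} {G₁ G₂ : ℕ → (ℕ → X) → ℝ≥0∞}
    {u : ℕ → U} {v : ℕ → Bool} {x : ℕ → X} (h : ∀ T, G₁ T x = G₂ T x) :
    totalCost g G₁ u v x = totalCost g G₂ u v x := by
  unfold totalCost; split <;> simp [h]

lemma totalCost_mono {g : X → X → U → ℝ≥0∞} {G₁ G₂ : ℕ → (ℕ → X) → ℝ≥0∞}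
    {u : ℕ → U} {v : ℕ → Bool} {x : ℕ → X} (h : ∀ T, G₁ T x ≤ G₂ T x) :
    totalCost g G₁ u v x ≤ totalCost g G₂ u v x := by
  unfold totalCost; split
  · exact add_le_add le_rfl (h _)
  · exact le_rfl

lemma perf_mono {F : X → U → Set X} {g : X → X → U → ℝ≥0∞} {G₁ G₂ : ℕ → (ℕ → X) → ℝ≥0∞}
    {μ : ℕ → (ℕ → X) → (ℕ → U) → Set (U × Bool)} {p : X}
    (h : ∀ T x, G₁ T x ≤ G₂ T x) : perf F g G₁ μ p ≤ perf F g G₂ μ p := by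
  refine iSup_le fun u => iSup_le fun v => iSup_le fun x => iSup_le fun hcl => ?_
  exact le_trans (totalCost_mono fun T => h T x) (le_perf hcl)

lemma value_mono {F : X → U → Set X} {g : X → X → U → ℝ≥0∞} {G₁ G₂ : ℕ → (ℕ → X) → ℝ≥0∞}
    {p : X} (h : ∀ T x, G₁ T x ≤ G₂ T x) : value F g G₁ p ≤ value F g G₂ p := by
  exact iInf_mono fun μ => iInf_mono fun _ => perf_mono h

lemma totalCost_shift {g : X → X → U → ℝ≥0∞} {G : ℕ → (ℕ → X) → ℝ≥0∞}
    {u : ℕ → U} {v : ℕ → Bool} {x : ℕ → X} (k : ℕ) (hv : ∀ t < k, v t = false) :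
    totalCost g G u v x =
      (∑ t ∈ Finset.range k, g (x t) (x (t + 1)) (u t)) +
        totalCost g (fun T _ => G (k + T) x)
          (fun t => u (k + t)) (fun t => v (k + t)) (fun t => x (k + t)) := by
  unfold totalCost
  by_cases h : ∃ t, v t = true
  · have hk : k ≤ Nat.find h :=
      le_of_not_gt fun hlt => absurd (Nat.find_spec h) (by simp [hv _ hlt])
    have h' : ∃ t, v (k + t) = true := ⟨Nat.find h - k, by
      rw [Nat.add_sub_cancel' hk]; exact Nat.find_spec h⟩
    have hfind : Nat.find h' = Nat.find h - k := by
      rw [Nat.find_eq_iff]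
      constructor
      · rw [Nat.add_sub_cancel' hk]; exact Nat.find_spec h
      · intro n hn
        have : k + n < Nat.find h := by omega
        exact Nat.find_min h this
    rw [dif_pos h, dif_pos h', hfind]
    have hsum : ∑ t ∈ Finset.range (Nat.find h), g (x t) (x (t + 1)) (u t) =
        (∑ t ∈ Finset.range k, g (x t) (x (t + 1)) (u t)) +
          ∑ t ∈ Finset.range (Nat.find h - k),
            g (x (k + t)) (x (k + t + 1)) (u (k + t)) := by
      have heq : Nat.find h = k + (Nat.find h - k) := by omega
      conv_lhs => rw [heq, Finset.sum_range_add]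
    rw [hsum, add_assoc]
    congr 1
    congr 1
    all_goals first
      | rfl
      | (exact Finset.sum_congr rfl fun t _ => by congr 1; omega)
      | (congr 1; omega)
  · have h' : ¬ ∃ t, v (k + t) = true := fun ⟨t, ht⟩ => h ⟨k + t, ht⟩
    rw [dif_neg h, dif_neg h', add_top]

end
end TwoPhase
namespace TwoPhase
noncomputable section
open Classical Function
variable {X U : Type*}

lemma isController_ofMemoryless {μ : X → Set (U × Bool)} (hμ : ∀ q, (μ q).Nonempty) :
    IsController (ofMemoryless μ) :=
  ⟨fun t x _ => hμ (x t), fun t x x' _ _ hx _ => by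
    simp only [ofMemoryless, hx t le_rfl]⟩

lemma isController_const (w : U × Bool) :
    IsController (fun (_ : ℕ) (_ : ℕ → X) (_ : ℕ → U) => ({w} : Set (U × Bool))) :=
  ⟨fun _ _ _ => ⟨w, rfl⟩, fun _ _ _ _ _ _ _ => rfl⟩

lemma exists_controller [Nonempty U] :
    ∃ μ : ℕ → (ℕ → X) → (ℕ → U) → Set (U × Bool), IsController μ :=
  ⟨_, isController_const (Classical.arbitrary U, true)⟩

/-- Bellman "stop now" inequality for reach-avoid values. -/
lemma value_le_stop [Nonempty U] (F : X → U → Set X) (g : X → X → U → ℝ≥0∞)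
    (A : Set X) (K : X → ℝ≥0∞) (Θ : X) :
    value F g (reachAvoidCost A K) Θ ≤ if Θ ∈ A then K Θ else ⊤ := by
  set w : U × Bool := (Classical.arbitrary U, true)
  refine le_trans (iInf_le_of_le _ (iInf_le_of_le (isController_const (X := X) w) le_rfl)) ?_
  refine iSup_le fun u => iSup_le fun v => iSup_le fun x => iSup_le fun hcl => ?_
  have hv0 : v 0 = true := by
    have := hcl.2 0
    simp only [Set.mem_singleton_iff, Prod.ext_iff] at this
    exact this.2
  have hex : ∃ t, v t = true := ⟨0, hv0⟩
  have hfind : Nat.find hex = 0 := Nat.find_eq_zero hex |>.2 hv0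
  rw [totalCost, dif_pos hex, hfind]
  simp [reachAvoidCost, hcl.1.1]

lemma value_le_stop' [Nonempty U] {F : X → U → Set X} {g : X → X → U → ℝ≥0∞}
    {A : Set X} {K : X → ℝ≥0∞} {Θ : X} (hΘ : Θ ∈ A) :
    value F g (reachAvoidCost A K) Θ ≤ K Θ := by
  simpa [hΘ] using value_le_stop F g A K Θ

end
end TwoPhase
namespace TwoPhase
noncomputable section
open Classical Function
variable {X U : Type*}

/-- Bellman step inequality for reach-avoid values. -/
lemma value_le_step [Nonempty U] {F : X → U → Set X} {g : X → X → U → ℝ≥0∞}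
    {A : Set X} {K : X → ℝ≥0∞} (hF : ∀ a b, (F a b).Nonempty) (Θ : X) (u' : U) :
    value F g (reachAvoidCost A K) Θ ≤
      ⨆ Θ' ∈ F Θ u', (g Θ Θ' u' + value F g (reachAvoidCost A K) Θ') := by
  set V : X → ℝ≥0∞ := fun q => value F g (reachAvoidCost A K) q with hV
  refine ENNReal.le_of_forall_pos_le_add fun ε hε _ => ?_
  have hεne : ((ε : ℝ≥0∞)) ≠ 0 := by exact_mod_cast hε.ne'
  have hsel : ∀ q : X, ∃ σ, IsController σ ∧
      perf F g (reachAvoidCost A K) σ q ≤ V q + ε := by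
    intro q
    by_cases hq : V q = ⊤
    · obtain ⟨σ, hσ⟩ := exists_controller (U := U) (X := X)
      exact ⟨σ, hσ, by simp [hq]⟩
    · have hlt : (⨅ σ, ⨅ _ : IsController σ, perf F g (reachAvoidCost A K) σ q)
          < V q + ε := lt_of_le_of_lt le_rfl (ENNReal.lt_add_right hq hεne)
      rw [iInf_lt_iff] at hlt
      obtain ⟨σ, h2⟩ := hlt
      rw [iInf_lt_iff] at h2
      obtain ⟨hσ, h3⟩ := h2
      exact ⟨σ, hσ, h3.le⟩
  choose σ hσc hσp using hsel
  set τ : ℕ → (ℕ → X) → (ℕ → U) → Set (U × Bool) := fun t x u =>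
    if t = 0 then ({(u', false)} : Set (U × Bool))
    else σ (x 1) (t - 1) (fun s => x (s + 1)) (fun s => u (s + 1)) with hτdef
  have hτ : IsController τ := by
    constructor
    · intro t x u
      by_cases ht : t = 0
      · simp [hτdef, ht]
      · simpa [hτdef, ht] using (hσc (x 1)).1 (t - 1) _ _
    · intro t x x' u u2 hx hu
      by_cases ht : t = 0
      · simp [hτdef, ht]
      · have h1 : (1 : ℕ) ≤ t := Nat.one_le_iff_ne_zero.2 ht
        simp only [hτdef, if_neg ht, hx 1 h1]
        exact (hσc (x' 1)).2 (t - 1) _ _ _ _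
          (fun s hs => hx (s + 1) (by omega)) (fun s hs => hu (s + 1) (by omega))
  refine le_trans (iInf_le_of_le τ (iInf_le_of_le hτ le_rfl)) ?_
  refine iSup_le fun u => iSup_le fun v => iSup_le fun x => iSup_le fun hcl => ?_
  have h0 : u 0 = u' ∧ v 0 = false := by
    have := hcl.2 0
    simp only [hτdef, if_pos rfl, Set.mem_singleton_iff, Prod.ext_iff] at this
    exact this
  have hx0 : x 0 = Θ := hcl.1.1
  have hx1 : x 1 ∈ F Θ u' := by
    have := hcl.1.2 0
    rwa [hx0, h0.1] at this
  have htail : ClosedLoop F (σ (x 1)) (x 1)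
      (fun s => u (s + 1)) (fun s => v (s + 1)) (fun s => x (s + 1)) := by
    refine ⟨⟨rfl, fun t => hcl.1.2 (t + 1)⟩, fun t => ?_⟩
    have := hcl.2 (t + 1)
    simpa [hτdef] using this
  have hcost : totalCost g (reachAvoidCost A K) u v x =
      g (x 0) (x 1) (u 0) +
        totalCost g (reachAvoidCost A K)
          (fun s => u (s + 1)) (fun s => v (s + 1)) (fun s => x (s + 1)) := by
    rw [totalCost_shift 1 (fun t ht => by interval_cases t; exact h0.2)]
    simp only [Finset.range_one, Finset.sum_singleton]
    have e1 : (fun t => u (1 + t)) = fun s => u (s + 1) := by funext s; rw [Nat.add_comm]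
    have e2 : (fun t => v (1 + t)) = fun s => v (s + 1) := by funext s; rw [Nat.add_comm]
    have e3 : (fun t => x (1 + t)) = fun s => x (s + 1) := by funext s; rw [Nat.add_comm]
    rw [e1, e2, e3]
    congr 1
    refine totalCost_congr fun T => ?_
    simp only [reachAvoidCost]
    rw [Nat.add_comm 1 T]
  rw [hcost, hx0, h0.1]
  have : totalCost g (reachAvoidCost A K)
      (fun s => u (s + 1)) (fun s => v (s + 1)) (fun s => x (s + 1)) ≤ V (x 1) + ε :=
    le_trans (le_perf htail) (hσp (x 1))
  calc g Θ (x 1) u' + totalCost g (reachAvoidCost A K) _ _ _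
      ≤ g Θ (x 1) u' + (V (x 1) + ε) := add_le_add le_rfl this
    _ = (g Θ (x 1) u' + V (x 1)) + ε := by rw [add_assoc]
    _ ≤ (⨆ Θ' ∈ F Θ u', (g Θ Θ' u' + V Θ')) + ε := by
        gcongr
        exact le_iSup₂_of_le (x 1) hx1 le_rfl

end
end TwoPhase
namespace TwoPhase
noncomputable section
open Classical Function
variable {X U : Type*}

lemma geom_sum_le (ε : ℝ≥0∞) (t : ℕ) :
    ∑ s ∈ Finset.range t, ε * 2⁻¹ ^ (s + 1) ≤ ε := by
  have h1 : ∑' s : ℕ, (2⁻¹ : ℝ≥0∞) ^ (s + 1) = 1 := by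
    have : ∀ s : ℕ, (2⁻¹ : ℝ≥0∞) ^ (s + 1) = 2⁻¹ * 2⁻¹ ^ s := fun s => pow_succ' _ _
    simp_rw [this]
    rw [ENNReal.tsum_mul_left, ENNReal.tsum_geometric, ENNReal.one_sub_inv_two]
    exact ENNReal.mul_inv_cancel (by norm_num) (by norm_num)
  calc ∑ s ∈ Finset.range t, ε * 2⁻¹ ^ (s + 1)
      ≤ ∑' s : ℕ, ε * 2⁻¹ ^ (s + 1) := ENNReal.sum_le_tsum _
    _ = ε * ∑' s : ℕ, (2⁻¹ : ℝ≥0∞) ^ (s + 1) := ENNReal.tsum_mul_left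
    _ = ε := by rw [h1, mul_one]

/-- The adversarial-run lemma: a "potential" satisfying the Bellman step
inequality and dominated by the terminal cost bounds the performance of every
controller from below. -/
lemma le_perf_adv [Nonempty U] {F : X → U → Set X} (hF : ∀ a b, (F a b).Nonempty)
    (g : X → X → U → ℝ≥0∞) (G : ℕ → (ℕ → X) → ℝ≥0∞) (Φ : ℕ → (ℕ → X) → ℝ≥0∞)
    (hΦc : ∀ (t : ℕ) (x y : ℕ → X), (∀ s ≤ t, x s = y s) → Φ t x = Φ t y)
    (hΦG : ∀ t x, Φ t x ≤ G t x)
    (hstep : ∀ (t : ℕ) (x : ℕ → X) (u' : U),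
      Φ t x ≤ ⨆ x' ∈ F (x t) u',
        (g (x t) x' u' + Φ (t + 1) (Function.update x (t + 1) x')))
    {μ : ℕ → (ℕ → X) → (ℕ → U) → Set (U × Bool)} (hμ : IsController μ) (p : X) :
    Φ 0 (fun _ => p) ≤ perf F g G μ p := by
  suffices hN : ∀ n : ℕ, min (Φ 0 (fun _ => p)) n ≤ perf F g G μ p by
    by_cases hfin : Φ 0 (fun _ => p) = ⊤
    · by_contra hlt
      have hne : perf F g G μ p ≠ ⊤ := fun h => hlt (h ▸ le_top)
      obtain ⟨n, hn⟩ := ENNReal.exists_nat_gt hne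
      have := hN n
      rw [hfin, min_eq_right (le_top (a := (n : ℝ≥0∞)))] at this
      exact absurd this (not_le.2 hn)
    · obtain ⟨n, hn⟩ := ENNReal.exists_nat_gt hfin
      have := hN n
      rwa [min_eq_left hn.le] at this
  intro n
  refine ENNReal.le_of_forall_pos_le_add fun ε hε _ => ?_
  have hεne : ((ε : ℝ≥0∞)) ≠ 0 := by exact_mod_cast hε.ne'
  set M : ℝ≥0∞ := min (Φ 0 (fun _ => p)) n with hMdef
  have hMtop : M ≠ ⊤ :=
    ((min_le_right _ _).trans_lt (by simp [ENNReal.natCast_lt_top])).ne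
  set εs : ℕ → ℝ≥0∞ := fun t => (ε : ℝ≥0∞) * 2⁻¹ ^ (t + 1) with hεsdef
  have hεs0 : ∀ t, εs t ≠ 0 := fun t => by
    simp [hεsdef, hεne, pow_ne_zero]
  -- per-step selection
  have hsel : ∀ (t : ℕ) (x : ℕ → X) (u' : U), ∃ x' ∈ F (x t) u',
      min (Φ t x) M ≤ g (x t) x' u' +
        min (Φ (t + 1) (Function.update x (t + 1) x')) M + εs t := by
    intro t x u'
    by_cases hm : min (Φ t x) M = 0
    · obtain ⟨x', hx'⟩ := hF (x t) u'
      exact ⟨x', hx', by simp [hm]⟩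
    · have hmtop : min (Φ t x) M ≠ ⊤ := fun h => hMtop (top_le_iff.1 (h ▸ min_le_right _ _))
      have h1 : min (Φ t x) M - εs t < min (Φ t x) M :=
        ENNReal.sub_lt_self hmtop hm (hεs0 t)
      have h2 : min (Φ t x) M - εs t < ⨆ x' ∈ F (x t) u',
          (g (x t) x' u' + Φ (t + 1) (Function.update x (t + 1) x')) :=
        lt_of_lt_of_le h1 ((min_le_left _ _).trans (hstep t x u'))
      rw [lt_iSup_iff] at h2
      obtain ⟨x', h3⟩ := h2
      rw [lt_iSup_iff] at h3
      obtain ⟨hmem, h4⟩ := h3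
      refine ⟨x', hmem, ?_⟩
      have h5 : min (Φ t x) M ≤
          g (x t) x' u' + Φ (t + 1) (Function.update x (t + 1) x') + εs t :=
        tsub_le_iff_right.1 h4.le
      by_cases hM' : Φ (t + 1) (Function.update x (t + 1) x') ≤ M
      · rwa [min_eq_left hM']
      · rw [min_eq_right (le_of_not_ge hM')]
        calc min (Φ t x) M ≤ M := min_le_right _ _
          _ ≤ g (x t) x' u' + M := le_add_self
          _ ≤ g (x t) x' u' + M + εs t := le_self_add
  choose xsel hxselF hxselI using hsel
  -- construct the adversarial run
  set u₀ : U := Classical.arbitrary U with hu₀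
  set step : ∀ _ : ℕ, ((ℕ → X) × (ℕ → U) × (ℕ → Bool)) → ((ℕ → X) × (ℕ → U) × (ℕ → Bool)) :=
    fun t q =>
      (Function.update q.1 (t + 1) (xsel t q.1 ((hμ.1 t q.1 q.2.1).some.1)),
       Function.update q.2.1 t ((hμ.1 t q.1 q.2.1).some.1),
       Function.update q.2.2 t ((hμ.1 t q.1 q.2.1).some.2)) with hstepdef
  set St : ℕ → ((ℕ → X) × (ℕ → U) × (ℕ → Bool)) :=
    fun t => Nat.rec ((fun _ => p), (fun _ => u₀), fun _ => false) step t with hStdef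
  have hStsucc : ∀ t, St (t + 1) = step t (St t) := fun t => rfl
  set xx : ℕ → X := fun t => (St t).1 t with hxxdef
  set uu : ℕ → U := fun t => (St (t + 1)).2.1 t with huudef
  set vv : ℕ → Bool := fun t => (St (t + 1)).2.2 t with hvvdef
  have hagree : ∀ t, (∀ s ≤ t, (St t).1 s = xx s) ∧
      (∀ s < t, (St t).2.1 s = uu s) ∧ (∀ s < t, (St t).2.2 s = vv s) := by
    intro t
    induction t with
    | zero =>
      exact ⟨fun s hs => by rw [Nat.le_zero.1 hs], fun s hs => absurd hs (by omega),
        fun s hs => absurd hs (by omega)⟩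
    | succ t ih =>
      refine ⟨fun s hs => ?_, fun s hs => ?_, fun s hs => ?_⟩
      · rcases Nat.lt_succ_iff_lt_or_eq.1 (Nat.lt_succ_of_le hs) with h | h
        · have hne : s ≠ t + 1 := by omega
          rw [hStsucc]
          show Function.update (St t).1 (t + 1) _ s = xx s
          rw [Function.update_of_ne hne]
          exact ih.1 s (by omega)
        · subst h; rfl
      · rcases Nat.lt_succ_iff_lt_or_eq.1 hs with h | h
        · have hne : s ≠ t := by omega
          rw [hStsucc]
          show Function.update (St t).2.1 t _ s = uu s
          rw [Function.update_of_ne hne]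
          exact ih.2.1 s h
        · subst h; rfl
      · rcases Nat.lt_succ_iff_lt_or_eq.1 hs with h | h
        · have hne : s ≠ t := by omega
          rw [hStsucc]
          show Function.update (St t).2.2 t _ s = vv s
          rw [Function.update_of_ne hne]
          exact ih.2.2 s h
        · subst h; rfl
  have huu : ∀ t, uu t = (hμ.1 t (St t).1 (St t).2.1).some.1 := fun t => by
    rw [huudef]; show Function.update (St t).2.1 t _ t = _; rw [Function.update_self]
  have hvv : ∀ t, vv t = (hμ.1 t (St t).1 (St t).2.1).some.2 := fun t => by
    rw [hvvdef]; show Function.update (St t).2.2 t _ t = _; rw [Function.update_self]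
  have hxx1 : ∀ t, xx (t + 1) = xsel t (St t).1 ((hμ.1 t (St t).1 (St t).2.1).some.1) :=
    fun t => by
      rw [hxxdef]; show Function.update (St t).1 (t + 1) _ (t + 1) = _
      rw [Function.update_self]
  have hxxt : ∀ t, (St t).1 t = xx t := fun t => (hagree t).1 t le_rfl
  have hcl : ClosedLoop F μ p uu vv xx := by
    refine ⟨⟨rfl, fun t => ?_⟩, fun t => ?_⟩
    · rw [hxx1 t, huu t, ← hxxt t]
      exact hxselF t (St t).1 _
    · have hmem := (hμ.1 t (St t).1 (St t).2.1).some_mem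
      have := hμ.2 t (St t).1 xx (St t).2.1 uu (fun s hs => (hagree t).1 s hs)
        (fun s hs => (hagree t).2.1 s hs)
      rw [← this, huu t, hvv t]
      exact hmem
  have hinv : ∀ t, M ≤ (∑ s ∈ Finset.range t, g (xx s) (xx (s + 1)) (uu s)) +
      min (Φ t xx) M + ∑ s ∈ Finset.range t, εs s := by
    intro t
    induction t with
    | zero =>
      have : Φ 0 xx = Φ 0 (fun _ => p) := hΦc 0 _ _ (fun s hs => by
        rw [Nat.le_zero.1 hs]; rfl)
      simp only [Finset.range_zero, Finset.sum_empty, zero_add, add_zero, this]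
      exact le_min (min_le_left _ _) le_rfl
    | succ t ih =>
      have hkey := hxselI t (St t).1 ((hμ.1 t (St t).1 (St t).2.1).some.1)
      have e1 : Φ t (St t).1 = Φ t xx := hΦc t _ _ (fun s hs => (hagree t).1 s hs)
      have e2 : Function.update (St t).1 (t + 1)
          (xsel t (St t).1 ((hμ.1 t (St t).1 (St t).2.1).some.1)) = (St (t + 1)).1 := rfl
      have e3 : Φ (t + 1) (St (t + 1)).1 = Φ (t + 1) xx :=
        hΦc (t + 1) _ _ (fun s hs => (hagree (t + 1)).1 s hs)
      rw [e1, e2, e3, hxxt t, ← hxx1 t, ← huu t] at hkey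
      calc M ≤ (∑ s ∈ Finset.range t, g (xx s) (xx (s + 1)) (uu s)) +
            min (Φ t xx) M + ∑ s ∈ Finset.range t, εs s := ih
        _ ≤ (∑ s ∈ Finset.range t, g (xx s) (xx (s + 1)) (uu s)) +
            (g (xx t) (xx (t + 1)) (uu t) + min (Φ (t + 1) xx) M + εs t) +
            ∑ s ∈ Finset.range t, εs s := by gcongr
        _ = ((∑ s ∈ Finset.range t, g (xx s) (xx (s + 1)) (uu s)) +
              g (xx t) (xx (t + 1)) (uu t)) + min (Φ (t + 1) xx) M +
            ((∑ s ∈ Finset.range t, εs s) + εs t) := by ring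
        _ = _ := by rw [← Finset.sum_range_succ, ← Finset.sum_range_succ]
  have hfinal : M ≤ totalCost g G uu vv xx + ε := by
    by_cases hex : ∃ t, vv t = true
    · set k := Nat.find hex with hk
      have : totalCost g G uu vv xx =
          (∑ s ∈ Finset.range k, g (xx s) (xx (s + 1)) (uu s)) + G k xx := by
        rw [totalCost, dif_pos hex]
      rw [this]
      calc M ≤ (∑ s ∈ Finset.range k, g (xx s) (xx (s + 1)) (uu s)) +
            min (Φ k xx) M + ∑ s ∈ Finset.range k, εs s := hinv k
        _ ≤ (∑ s ∈ Finset.range k, g (xx s) (xx (s + 1)) (uu s)) + G k xx + ε := by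
            gcongr
            · exact (min_le_left _ _).trans (hΦG k xx)
            · exact geom_sum_le ε k
    · rw [totalCost, dif_neg hex]
      exact le_top.trans le_self_add
  exact hfinal.trans (add_le_add (le_perf hcl) le_rfl)

end
end TwoPhase
namespace TwoPhase
noncomputable section
open Classical Function
variable {X U : Type*}

lemma exists_run_mem {F : X → U → Set X} (hF : ∀ a b, (F a b).Nonempty)
    {μ : X → Set (U × Bool)} (hμ : ∀ q, (μ q).Nonempty) (Θ : X) (w0 : U × Bool)
    (hw0 : w0 ∈ μ Θ) :
    ∃ u v x, ClosedLoop F (ofMemoryless μ) Θ u v x ∧ u 0 = w0.1 ∧ v 0 = w0.2 := by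
  set step : X × (U × Bool) → X × (U × Bool) := fun q =>
    ((hF q.1 q.2.1).some, (hμ (hF q.1 q.2.1).some).some) with hstepdef
  set s : ℕ → X × (U × Bool) := fun t => Nat.rec (Θ, w0) (fun _ q => step q) t with hsdef
  refine ⟨fun t => (s t).2.1, fun t => (s t).2.2, fun t => (s t).1,
    ⟨⟨rfl, fun t => ?_⟩, fun t => ?_⟩, rfl, rfl⟩
  · exact (hF _ _).some_mem
  · show ((s t).2.1, (s t).2.2) ∈ μ ((s t).1)
    rw [Prod.mk.eta]
    cases t with
    | zero => exact hw0
    | succ t => exact (hμ _).some_mem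

lemma perf_prefix {F : X → U → Set X} {g : X → X → U → ℝ≥0∞} {A : Set X} {K : X → ℝ≥0∞}
    {μ : X → Set (U × Bool)} (hF : ∀ a b, (F a b).Nonempty)
    (hμ : ∀ q, (μ q).Nonempty) (xb : ℕ → X) (ub : ℕ → U) (k : ℕ)
    (hpre : ∀ t < k, xb (t + 1) ∈ F (xb t) (ub t) ∧ (ub t, false) ∈ μ (xb t)) :
    (∑ t ∈ Finset.range k, g (xb t) (xb (t + 1)) (ub t)) +
      perf F g (reachAvoidCost A K) (ofMemoryless μ) (xb k) ≤
    perf F g (reachAvoidCost A K) (ofMemoryless μ) (xb 0) := by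
  have key : ∀ (w : ℕ → U) (vv : ℕ → Bool) (y : ℕ → X),
      ClosedLoop F (ofMemoryless μ) (xb k) w vv y →
      (∑ t ∈ Finset.range k, g (xb t) (xb (t + 1)) (ub t)) +
        totalCost g (reachAvoidCost A K) w vv y ≤
      perf F g (reachAvoidCost A K) (ofMemoryless μ) (xb 0) := by
    intro w vv y hcl
    have hy0 : y 0 = xb k := hcl.1.1
    set xc : ℕ → X := fun t => if t < k then xb t else y (t - k) with hxc
    set uc : ℕ → U := fun t => if t < k then ub t else w (t - k) with huc
    set vc : ℕ → Bool := fun t => if t < k then false else vv (t - k) with hvc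
    have hxc_lt : ∀ t, t < k → xc t = xb t := fun t ht => if_pos ht
    have hxc_ge : ∀ t, k ≤ t → xc t = y (t - k) := fun t ht => if_neg (not_lt.2 ht)
    have hxck : ∀ t, t ≤ k → xc t = xb t := by
      intro t ht
      rcases lt_or_eq_of_le ht with h | h
      · exact hxc_lt t h
      · subst h; rw [hxc_ge t le_rfl, Nat.sub_self, hy0]
    have hclc : ClosedLoop F (ofMemoryless μ) (xb 0) uc vc xc := by
      refine ⟨⟨hxck 0 (Nat.zero_le k), fun t => ?_⟩, fun t => ?_⟩
      · by_cases ht : t < k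
        · rw [hxck (t + 1) ht, hxc_lt t ht]
          show xb (t + 1) ∈ F (xb t) (uc t)
          rw [huc]; simp only [if_pos ht]
          exact (hpre t ht).1
        · push_neg at ht
          rw [hxc_ge (t + 1) (by omega), hxc_ge t ht]
          show y (t + 1 - k) ∈ F (y (t - k)) (uc t)
          rw [huc]; simp only [if_neg (not_lt.2 ht)]
          have : t + 1 - k = (t - k) + 1 := by omega
          rw [this]
          exact hcl.1.2 (t - k)
      · by_cases ht : t < k
        · show (uc t, vc t) ∈ μ (xc t)
          rw [huc, hvc, hxc_lt t ht]; simp only [if_pos ht]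
          exact (hpre t ht).2
        · push_neg at ht
          show (uc t, vc t) ∈ μ (xc t)
          rw [huc, hvc, hxc_ge t ht]; simp only [if_neg (not_lt.2 ht)]
          exact hcl.2 (t - k)
    have hcost : totalCost g (reachAvoidCost A K) uc vc xc =
        (∑ t ∈ Finset.range k, g (xb t) (xb (t + 1)) (ub t)) +
          totalCost g (reachAvoidCost A K) w vv y := by
      rw [totalCost_shift k (fun t ht => by rw [hvc]; simp [ht])]
      have e1 : (fun t => uc (k + t)) = w := by
        funext t; rw [huc]; simp only [if_neg (by omega : ¬ k + t < k)]
        congr 1; omega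
      have e2 : (fun t => vc (k + t)) = vv := by
        funext t; rw [hvc]; simp only [if_neg (by omega : ¬ k + t < k)]
        congr 1; omega
      have e3 : (fun t => xc (k + t)) = y := by
        funext t; rw [hxc_ge (k + t) (by omega)]
        congr 1; omega
      rw [e1, e2, e3]
      congr 1
      · refine Finset.sum_congr rfl fun t ht => ?_
        have ht' := Finset.mem_range.1 ht
        rw [hxc_lt t ht', hxck (t + 1) ht']
        congr 1
        rw [huc]; simp [ht']
      · refine totalCost_congr fun T => ?_
        simp only [reachAvoidCost]
        rw [hxc_ge (k + T) (by omega)]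
        congr 2 <;> · congr 1; omega
    rw [← hcost]
    exact le_perf hclc
  set Run := {r : (ℕ → U) × (ℕ → Bool) × (ℕ → X) //
    ClosedLoop F (ofMemoryless μ) (xb k) r.1 r.2.1 r.2.2} with hRun
  have hne : Nonempty Run := by
    obtain ⟨u, v, x, hcl, -, -⟩ :=
      exists_run_mem hF hμ (xb k) (hμ (xb k)).some (hμ (xb k)).some_mem
    exact ⟨⟨(u, v, x), hcl⟩⟩
  have hperf : perf F g (reachAvoidCost A K) (ofMemoryless μ) (xb k) =
      ⨆ r : Run, totalCost g (reachAvoidCost A K) r.1.1 r.1.2.1 r.1.2.2 := by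
    refine le_antisymm ?_ (iSup_le fun r => le_perf r.2)
    refine iSup_le fun u => iSup_le fun v => iSup_le fun x => iSup_le fun hcl => ?_
    exact le_iSup (fun r : Run => totalCost g (reachAvoidCost A K) r.1.1 r.1.2.1 r.1.2.2)
      ⟨(u, v, x), hcl⟩
  rw [hperf, ENNReal.add_iSup]
  exact iSup_le fun r => key r.1.1 r.1.2.1 r.1.2.2 r.2

end
end TwoPhase
namespace TwoPhase
noncomputable section
open Classical Function
variable {X U : Type*}

lemma refine_lift {XA : Set (Set X)} {UA : Set U}
    {F : X → U → Set X} {F' : ↥XA → ↥UA → Set ↥XA}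
    (hiii : ∀ (Ω Ω' : ↥XA) (u : ↥UA),
      ((Ω' : Set X) ∩ ⋃ y ∈ (Ω : Set X), F y u).Nonempty → Ω' ∈ F' Ω u)
    {g : X → X → U → ℝ≥0∞} {g' : ↥XA → ↥XA → ↥UA → ℝ≥0∞}
    (hg' : ∀ (a b : X) (Ω Ω' : ↥XA) (w : ↥UA),
      a ∈ (Ω : Set X) → b ∈ (Ω' : Set X) → g a b w ≤ g' Ω Ω' w)
    (Ac : Set X) (G0c : X → ℝ≥0∞) (A' : Set ↥XA) (H' : ↥XA → ℝ≥0∞)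
    (hA : ∀ Θ : ↥XA, Θ ∈ A' → (Θ : Set X) ⊆ Ac)
    (hH : ∀ Θ : ↥XA, Θ ∈ A' → ∀ z ∈ (Θ : Set X), G0c z ≤ H' Θ)
    (μ' : ↥XA → Set (↥UA × Bool)) (q : X) (u : ℕ → U) (v : ℕ → Bool) (y : ℕ → X)
    (h0 : y 0 = q) (hFt : ∀ t, y (t + 1) ∈ F (y t) (u t))
    (hμt : ∀ t, (u t, v t) ∈ refineCtrl μ' (y t)) :
    ∃ Θ₀ : ↥XA, q ∈ (Θ₀ : Set X) ∧
      totalCost g (reachAvoidCost Ac G0c) u v y ≤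
        perf F' g' (reachAvoidCost A' H') (ofMemoryless μ') Θ₀ := by
  have hsel : ∀ t, ∃ (Ω : ↥XA) (w : ↥UA × Bool), y t ∈ (Ω : Set X) ∧ w ∈ μ' Ω ∧
      (w.1 : U) = u t ∧ w.2 = v t := by
    intro t
    have := hμt t
    simp only [refineCtrl, Set.mem_iUnion, Set.mem_image] at this
    obtain ⟨Ω, hΩ, w, hw, heq⟩ := this
    have h1 : (w.1 : U) = u t := congrArg Prod.fst heq
    have h2 : w.2 = v t := congrArg Prod.snd heq
    exact ⟨Ω, w, hΩ, hw, h1, h2⟩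
  choose Ω w hmem hw hw1 hw2 using hsel
  refine ⟨Ω 0, h0 ▸ hmem 0, ?_⟩
  have hcl : ClosedLoop F' (ofMemoryless μ') (Ω 0)
      (fun t => (w t).1) v (fun t => Ω t) := by
    refine ⟨⟨rfl, fun t => ?_⟩, fun t => ?_⟩
    · refine hiii _ _ _ ⟨y (t + 1), hmem (t + 1), ?_⟩
      refine Set.mem_biUnion (hmem t) ?_
      rw [hw1 t]; exact hFt t
    · show ((w t).1, v t) ∈ μ' (Ω t)
      rw [← hw2 t]
      exact hw t
  refine le_trans ?_ (le_perf hcl)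
  unfold totalCost
  by_cases hex : ∃ t, v t = true
  · rw [dif_pos hex, dif_pos hex]
    refine add_le_add ?_ ?_
    · refine Finset.sum_le_sum fun t _ => ?_
      rw [← hw1 t]
      exact hg' _ _ _ _ _ (hmem t) (hmem (t + 1))
    · simp only [reachAvoidCost]
      by_cases hT : Ω (Nat.find hex) ∈ A'
      · rw [if_pos hT, if_pos (hA _ hT (hmem _))]
        exact hH _ hT _ (hmem _)
      · rw [if_neg hT]; exact le_top
  · rw [dif_neg hex, dif_neg hex]

end
end TwoPhase

namespace TwoPhase

/-- Theorem 3 of the paper. Let `Π` be the two-phase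
reach-avoid problem associated with `A₁`, `A₂`, `G₀` on `(X,U,F)`, and let
`(X',U',F')` be an abstraction satisfying (i)-(iii).  With
`A'ᵢ = {Ω ∈ X' | Ω ⊆ Aᵢ}` nonempty, `G₀'(Ω) ≥ sup_{x∈Ω} G₀ x`,
`g x x' u ≤ g' Ω Ω' u`, let `Π'` be the abstract two-phase reach-avoid problem
with value function `V'`, let `μ₂'` be memoryless optimal for the abstract
reach-avoid problem `Π₂'` associated with `A'₂`, `G₀'`, and `μ₁'` memoryless
with single-valued stopping component optimal for the abstract reach-avoid
problem `Π₁'` associated with `A'₁` and terminal cost `L₂'(·,μ₂')`.  Then the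
refined composed controller `μ_Q` satisfies
`L(p, μ_Q) ≤ sup { V'(Ω) | p ∈ Ω }` for all `p ∈ X`. -/
theorem approx_solution_refinement
    {X U : Type*} [Nonempty X] [Nonempty U]
    (F : X → U → Set X) (hF : ∀ x u, (F x u).Nonempty)
    (g : X → X → U → ℝ≥0∞) (G₀ : X → ℝ≥0∞)
    (A₁ A₂ : Set X) (hA₁ : A₁.Nonempty) (hA₂ : A₂.Nonempty)
    (XA : Set (Set X)) (UA : Set U)
    (hcover : ∀ p : X, ∃ Ω ∈ XA, p ∈ Ω) (hΩne : ∀ Ω ∈ XA, Ω.Nonempty)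
    (F' : ↥XA → ↥UA → Set ↥XA) (hF' : ∀ Ω u, (F' Ω u).Nonempty)
    (hiii : ∀ (Ω Ω' : ↥XA) (u : ↥UA),
      ((Ω' : Set X) ∩ ⋃ y ∈ (Ω : Set X), F y u).Nonempty → Ω' ∈ F' Ω u)
    (A₁' A₂' : Set ↥XA)
    (hA₁' : A₁' = {Ω : ↥XA | (Ω : Set X) ⊆ A₁}) (hA₁'ne : A₁'.Nonempty)
    (hA₂' : A₂' = {Ω : ↥XA | (Ω : Set X) ⊆ A₂}) (hA₂'ne : A₂'.Nonempty)
    (G₀' : ↥XA → ℝ≥0∞) (hG₀' : ∀ Ω : ↥XA, (⨆ x ∈ (Ω : Set X), G₀ x) ≤ G₀' Ω)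
    (g' : ↥XA → ↥XA → ↥UA → ℝ≥0∞)
    (hg' : ∀ (x x' : X) (Ω Ω' : ↥XA) (u : ↥UA),
      x ∈ (Ω : Set X) → x' ∈ (Ω' : Set X) → g x x' u ≤ g' Ω Ω' u)
    (μ₂' : ↥XA → Set (↥UA × Bool)) (hμ₂' : ∀ Ω, (μ₂' Ω).Nonempty)
    (hopt₂ : ∀ Ω, perf F' g' (reachAvoidCost A₂' G₀') (ofMemoryless μ₂') Ω =
      value F' g' (reachAvoidCost A₂' G₀') Ω)
    (μ₁' : ↥XA → Set (↥UA × Bool)) (hμ₁' : ∀ Ω, (μ₁' Ω).Nonempty)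
    (hsv : SVStop μ₁')
    (hopt₁ : ∀ Ω, perf F' g'
        (reachAvoidCost A₁'
          (fun Θ => perf F' g' (reachAvoidCost A₂' G₀') (ofMemoryless μ₂') Θ))
        (ofMemoryless μ₁') Ω =
      value F' g'
        (reachAvoidCost A₁'
          (fun Θ => perf F' g' (reachAvoidCost A₂' G₀') (ofMemoryless μ₂') Θ)) Ω)
    (p : X) :
    perf F g (twoPhaseCost A₁ A₂ G₀)
        (composed (refineCtrl μ₁') (refineCtrl μ₂')) p ≤
      ⨆ (Ω : ↥XA) (_ : p ∈ (Ω : Set X)),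
        value F' g' (twoPhaseCost A₁' A₂' G₀') Ω := by
  classical
  haveI hXAne : Nonempty ↥XA := ⟨hA₁'ne.choose⟩
  haveI hUAne : Nonempty ↥UA := ⟨((hμ₁' hA₁'ne.choose).some.1)⟩
  set K₁ : ↥XA → ℝ≥0∞ :=
    fun Θ => perf F' g' (reachAvoidCost A₂' G₀') (ofMemoryless μ₂') Θ with hK₁
  set V₂ : ↥XA → ℝ≥0∞ := fun Θ => value F' g' (reachAvoidCost A₂' G₀') Θ with hV₂
  set V₁ : ↥XA → ℝ≥0∞ := fun Θ => value F' g' (reachAvoidCost A₁' K₁) Θ with hV₁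
  set Vtp : ↥XA → ℝ≥0∞ := fun Θ => value F' g' (twoPhaseCost A₁' A₂' G₀') Θ with hVtp
  -- (f1) V₂ is below the performance of μ₁' for the phase-1 problem
  have f1 : ∀ Θ : ↥XA, V₂ Θ ≤ perf F' g' (reachAvoidCost A₁' K₁) (ofMemoryless μ₁') Θ := by
    intro Θ
    refine le_perf_adv hF' g' (reachAvoidCost A₁' K₁) (fun t x => V₂ (x t))
      (fun t x y h => congrArg V₂ (h t le_rfl)) (fun t x => ?_) (fun t x u' => ?_)
      (isController_ofMemoryless hμ₁') Θ
    · show V₂ (x t) ≤ if x t ∈ A₁' then K₁ (x t) else ⊤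
      by_cases h : x t ∈ A₁'
      · rw [if_pos h]; exact (hopt₂ (x t)).ge
      · rw [if_neg h]; exact le_top
    · simp only [Function.update_self]
      exact value_le_step hF' (x t) u'
  -- (f2) V₁ is below the two-phase value function
  have f2 : ∀ Θ : ↥XA, V₁ Θ ≤ Vtp Θ := by
    intro Θ
    refine le_iInf fun μ => le_iInf fun hμc => ?_
    set Φ : ℕ → (ℕ → ↥XA) → ℝ≥0∞ := fun t x =>
      if ∃ s ≤ t, x s ∈ A₁' then V₂ (x t) else V₁ (x t) with hΦ
    have hV₁V₂ : ∀ Θ' : ↥XA, Θ' ∈ A₁' → V₁ Θ' ≤ V₂ Θ' := by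
      intro Θ' hΘ'
      refine (value_le_stop' hΘ').trans ?_
      exact (hopt₂ Θ').le
    have hΦ0 : V₁ Θ ≤ Φ 0 (fun _ => Θ) := by
      simp only [hΦ]
      by_cases h : Θ ∈ A₁'
      · rw [if_pos ⟨0, le_rfl, h⟩]
        exact hV₁V₂ Θ h
      · rw [if_neg (by rintro ⟨s, -, hs⟩; exact h hs)]
    refine hΦ0.trans ?_
    refine le_perf_adv hF' g' (twoPhaseCost A₁' A₂' G₀') Φ ?_ ?_ ?_ hμc Θ
    · intro t x y h
      simp only [hΦ]
      have hiff : (∃ s ≤ t, x s ∈ A₁') ↔ ∃ s ≤ t, y s ∈ A₁' := by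
        constructor
        · rintro ⟨s, hs, hmem⟩; exact ⟨s, hs, by rwa [h s hs] at hmem⟩
        · rintro ⟨s, hs, hmem⟩; exact ⟨s, hs, by rwa [← h s hs] at hmem⟩
      by_cases hc : ∃ s ≤ t, x s ∈ A₁'
      · rw [if_pos hc, if_pos (hiff.1 hc), h t le_rfl]
      · rw [if_neg hc, if_neg (fun hy => hc (hiff.2 hy)), h t le_rfl]
    · intro t x
      show Φ t x ≤ twoPhaseCost A₁' A₂' G₀' t x
      simp only [hΦ, twoPhaseCost]
      by_cases hvis : ∃ s ≤ t, x s ∈ A₁'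
      · rw [if_pos hvis]
        by_cases h2 : x t ∈ A₂'
        · rw [if_pos ⟨hvis, h2⟩]
          exact value_le_stop' h2
        · rw [if_neg (fun hh => h2 hh.2)]; exact le_top
      · rw [if_neg hvis, if_neg (fun hh => hvis hh.1)]; exact le_top
    · intro t x u'
      have hupd : ∀ x' : ↥XA, ∀ s ≤ t, Function.update x (t + 1) x' s = x s :=
        fun x' s hs => Function.update_of_ne (by omega) _ _
      by_cases hvis : ∃ s ≤ t, x s ∈ A₁'
      · have h1 : Φ t x = V₂ (x t) := if_pos hvis
        have h2 : ∀ x' : ↥XA, Φ (t + 1) (Function.update x (t + 1) x') = V₂ x' := by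
          intro x'
          obtain ⟨s, hs, hmem⟩ := hvis
          simp only [hΦ]
          rw [if_pos ⟨s, by omega, by rw [hupd x' s hs]; exact hmem⟩,
            Function.update_self]
        rw [h1]
        refine (value_le_step hF' (x t) u').trans ?_
        refine iSup₂_mono fun x' hx' => ?_
        rw [h2 x']
      · have h1 : Φ t x = V₁ (x t) := if_neg hvis
        rw [h1]
        refine (value_le_step hF' (x t) u').trans ?_
        refine iSup₂_mono fun x' hx' => ?_
        refine add_le_add le_rfl ?_
        simp only [hΦ]
        by_cases hc : ∃ s ≤ t + 1, Function.update x (t + 1) x' s ∈ A₁'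
        · rw [if_pos hc, Function.update_self]
          obtain ⟨s, hs, hmem⟩ := hc
          rcases Nat.lt_succ_iff_lt_or_eq.1 (Nat.lt_succ_of_le hs) with h | h
          · exfalso
            exact hvis ⟨s, by omega, by rwa [hupd x' s (by omega)] at hmem⟩
          · subst h
            rw [Function.update_self] at hmem
            exact hV₁V₂ x' hmem
        · rw [if_neg hc, Function.update_self]
  -- bound each concrete closed-loop run
  refine iSup_le fun u => iSup_le fun v => iSup_le fun x => iSup_le fun hcl => ?_
  set P : ℕ → Prop := fun t => ∀ s ≤ t, ∀ w ∈ refineCtrl μ₁' (x s), w.2 = false with hP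
  have hif : ∀ t, (u t, v t) ∈
      (if P t then refineCtrl μ₁' (x t) else refineCtrl μ₂' (x t)) := fun t => hcl.2 t
  by_cases hall : ∀ t, P t
  · -- phase 1 never ends: infinite cost on both sides
    have hμ1 : ∀ t, (u t, v t) ∈ refineCtrl μ₁' (x t) := by
      intro t; have := hif t; rwa [if_pos (hall t)] at this
    have hvf : ¬ ∃ t, v t = true := by
      rintro ⟨t, ht⟩
      have := hall t t le_rfl (u t, v t) (hμ1 t)
      simp [ht] at this
    obtain ⟨Θ₀, hΘ₀p, hle⟩ := refine_lift hiii hg' Set.univ (fun _ => 0) A₁' K₁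
      (fun Θ _ => Set.subset_univ _) (fun Θ _ z _ => by simp) μ₁' p u v x
      hcl.1.1 hcl.1.2 hμ1
    have htop : perf F' g' (reachAvoidCost A₁' K₁) (ofMemoryless μ₁') Θ₀ = ⊤ := by
      refine top_le_iff.1 (le_trans ?_ hle)
      rw [totalCost, dif_neg hvf]
    have hVtop : Vtp Θ₀ = ⊤ := by
      refine top_le_iff.1 ?_
      calc (⊤ : ℝ≥0∞) = perf F' g' (reachAvoidCost A₁' K₁) (ofMemoryless μ₁') Θ₀ :=
            htop.symm
        _ = V₁ Θ₀ := hopt₁ Θ₀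
        _ ≤ Vtp Θ₀ := f2 Θ₀
    refine le_trans le_top ?_
    rw [← hVtop]
    exact le_iSup₂_of_le Θ₀ hΘ₀p le_rfl
  · -- phase 1 ends at time T₁
    have hex : ∃ t, ¬ P t := by push_neg at hall; exact hall
    set T₁ := Nat.find hex with hT₁
    have hPlt : ∀ t < T₁, P t := fun t ht => not_not.1 (Nat.find_min hex ht)
    have hnP : ¬ P T₁ := Nat.find_spec hex
    have hnPge : ∀ t, T₁ ≤ t → ¬ P t := fun t ht hPt =>
      hnP (fun s hs w hw => hPt s (hs.trans ht) w hw)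
    have hμ1pre : ∀ t < T₁, (u t, v t) ∈ refineCtrl μ₁' (x t) := by
      intro t ht; have := hif t; rwa [if_pos (hPlt t ht)] at this
    have hvpre : ∀ t < T₁, v t = false := fun t ht =>
      hPlt t ht t le_rfl (u t, v t) (hμ1pre t ht)
    have hμ2post : ∀ t, T₁ ≤ t → (u t, v t) ∈ refineCtrl μ₂' (x t) := by
      intro t ht; have := hif t; rwa [if_neg (hnPge t ht)] at this
    -- the stopping cell Ω* at time T₁
    obtain ⟨Ωs, hΩsmem, hΩsstop⟩ : ∃ Ωs : ↥XA, x T₁ ∈ (Ωs : Set X) ∧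
        ∀ w ∈ μ₁' Ωs, w.2 = true := by
      simp only [hP] at hnP
      push_neg at hnP
      obtain ⟨s, hs, w, hw, hwt⟩ := hnP
      have hsT : s = T₁ := by
        rcases lt_or_eq_of_le hs with h | h
        · exact absurd (hPlt s h s le_rfl w hw) hwt
        · exact h
      subst hsT
      simp only [refineCtrl, Set.mem_iUnion, Set.mem_image] at hw
      obtain ⟨Ω, hΩ, w', hw', heq⟩ := hw
      have hw2 : w'.2 = true := by
        have h2 := congrArg Prod.snd heq
        simp only at h2
        rw [h2]
        revert hwt
        cases w.2 <;> simp
      rcases hsv Ω with hfa | htr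
      · exact absurd (hfa w' hw') (by simp [hw2])
      · exact ⟨Ω, hΩ, htr⟩
    -- lift the tail run
    obtain ⟨Θ₀, hΘ₀mem, htail⟩ := refine_lift hiii hg' A₂ G₀ A₂' G₀'
      (fun Θ hΘ => by rw [hA₂'] at hΘ; exact hΘ)
      (fun Θ hΘ z hz => le_trans (le_iSup₂_of_le z hz le_rfl) (hG₀' Θ))
      μ₂' (x T₁) (fun t => u (T₁ + t)) (fun t => v (T₁ + t)) (fun t => x (T₁ + t))
      rfl (fun t => hcl.1.2 (T₁ + t)) (fun t => hμ2post (T₁ + t) (Nat.le_add_right _ _))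
    -- choose the prefix cells
    have hcell : ∀ t, ∃ (Ω : ↥XA) (w : ↥UA × Bool), t < T₁ →
        x t ∈ (Ω : Set X) ∧ w ∈ μ₁' Ω ∧ (w.1 : U) = u t ∧ w.2 = false := by
      intro t
      by_cases ht : t < T₁
      · have := hμ1pre t ht
        simp only [refineCtrl, Set.mem_iUnion, Set.mem_image] at this
        obtain ⟨Ω, hΩ, w, hw, heq⟩ := this
        refine ⟨Ω, w, fun _ => ⟨hΩ, hw, congrArg Prod.fst heq, ?_⟩⟩
        have := congrArg Prod.snd heq
        simp only at this
        rw [this, hvpre t ht]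
      · exact ⟨Classical.arbitrary _, Classical.arbitrary _, fun h => absurd h ht⟩
    choose Ωp wp hΩwp using hcell
    -- the abstract prefix trajectory with endpoint Θ
    have hchain : ∀ Θ : ↥XA, x T₁ ∈ (Θ : Set X) →
        ∃ Ω₀ : ↥XA, p ∈ (Ω₀ : Set X) ∧
          (∑ t ∈ Finset.range T₁, g (x t) (x (t + 1)) (u t)) +
            perf F' g' (reachAvoidCost A₁' K₁) (ofMemoryless μ₁') Θ ≤
          perf F' g' (reachAvoidCost A₁' K₁) (ofMemoryless μ₁') Ω₀ := by
      intro Θ hΘ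
      set xb : ℕ → ↥XA := fun t => if t < T₁ then Ωp t else Θ with hxb
      set ub : ℕ → ↥UA := fun t => (wp t).1 with hub
      have hxbmem : ∀ t, t ≤ T₁ → x t ∈ (xb t : Set X) := by
        intro t ht
        simp only [hxb]
        by_cases h : t < T₁
        · rw [if_pos h]; exact ((hΩwp t) h).1
        · have : t = T₁ := by omega
          rw [if_neg h, this]; exact hΘ
      have hpre : ∀ t < T₁, xb (t + 1) ∈ F' (xb t) (ub t) ∧
          (ub t, false) ∈ μ₁' (xb t) := by
        intro t ht
        obtain ⟨hm, hw, hw1, hw2⟩ := (hΩwp t) ht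
        have hxbt : xb t = Ωp t := by simp only [hxb]; rw [if_pos ht]
        constructor
        · refine hiii _ _ _ ⟨x (t + 1), hxbmem (t + 1) (by omega), ?_⟩
          have hxbt' : (xb t : Set X) = (Ωp t : Set X) := by rw [hxbt]
          rw [hxbt']
          refine Set.mem_biUnion hm ?_
          have he : ((ub t : U)) = u t := hw1
          rw [he]
          exact hcl.1.2 t
        · rw [hxbt]
          have he : ub t = (wp t).1 := rfl
          rw [he, ← hw2]
          exact hw
      refine ⟨xb 0, ?_, ?_⟩
      · rw [← hcl.1.1]
        exact hxbmem 0 (Nat.zero_le _)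
      · have := perf_prefix (g := g') (A := A₁') (K := K₁) hF' hμ₁' xb ub T₁ hpre
        have hxbT : xb T₁ = Θ := by simp only [hxb]; rw [if_neg (lt_irrefl T₁)]
        rw [hxbT] at this
        refine le_trans ?_ this
        refine add_le_add ?_ le_rfl
        refine Finset.sum_le_sum fun t ht => ?_
        have ht' := Finset.mem_range.1 ht
        obtain ⟨hm, hw, hw1, hw2⟩ := (hΩwp t) ht'
        rw [← hw1]
        exact hg' _ _ _ _ _ (hxbmem t (by omega)) (hxbmem (t + 1) (by omega))
    by_cases hA1 : Ωs ∈ A₁'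
    · -- phase 1 terminal cell is inside A₁: couple with the tail
      have hxA₁ : x T₁ ∈ A₁ := by
        rw [hA₁'] at hA1
        exact hA1 hΩsmem
      obtain ⟨Ω₀, hΩ₀p, hch⟩ := hchain Θ₀ hΘ₀mem
      have hcost : totalCost g (twoPhaseCost A₁ A₂ G₀) u v x ≤
          (∑ t ∈ Finset.range T₁, g (x t) (x (t + 1)) (u t)) +
            totalCost g (reachAvoidCost A₂ G₀)
              (fun t => u (T₁ + t)) (fun t => v (T₁ + t)) (fun t => x (T₁ + t)) := by
        rw [totalCost_shift T₁ hvpre]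
        refine add_le_add le_rfl (totalCost_mono fun T => ?_)
        show twoPhaseCost A₁ A₂ G₀ (T₁ + T) x ≤ _
        rw [twoPhaseCost, reachAvoidCost]
        by_cases h2 : x (T₁ + T) ∈ A₂
        · rw [if_pos ⟨⟨T₁, Nat.le_add_right _ _, hxA₁⟩, h2⟩, if_pos h2]
        · rw [if_neg h2]
          exact le_top
      refine le_trans hcost ?_
      have hV₂Θ₀ : perf F' g' (reachAvoidCost A₂' G₀') (ofMemoryless μ₂') Θ₀ ≤
          perf F' g' (reachAvoidCost A₁' K₁) (ofMemoryless μ₁') Θ₀ := by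
        rw [hopt₂ Θ₀]
        exact f1 Θ₀
      refine le_trans (add_le_add le_rfl (htail.trans hV₂Θ₀)) ?_
      refine le_trans hch ?_
      rw [hopt₁ Ω₀]
      exact le_trans (f2 Ω₀) (le_iSup₂_of_le Ω₀ hΩ₀p le_rfl)
    · -- phase 1 terminal cell outside A₁: abstract performance is infinite
      obtain ⟨Ω₀, hΩ₀p, hch⟩ := hchain Ωs hΩsmem
      have htop : perf F' g' (reachAvoidCost A₁' K₁) (ofMemoryless μ₁') Ωs = ⊤ := by
        obtain ⟨u', v', x', hcl', hu0, hv0⟩ :=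
          exists_run_mem hF' hμ₁' Ωs (hμ₁' Ωs).some (hμ₁' Ωs).some_mem
        have hv0t : v' 0 = true := by
          rw [hv0]
          exact hΩsstop _ (hμ₁' Ωs).some_mem
        refine top_le_iff.1 (le_trans ?_ (le_perf hcl'))
        have hex' : ∃ t, v' t = true := ⟨0, hv0t⟩
        have hfind : Nat.find hex' = 0 := (Nat.find_eq_zero hex').2 hv0t
        rw [totalCost, dif_pos hex', hfind]
        simp only [Finset.range_zero, Finset.sum_empty, zero_add, reachAvoidCost]
        rw [hcl'.1.1, if_neg hA1]
      have : perf F' g' (reachAvoidCost A₁' K₁) (ofMemoryless μ₁') Ω₀ = ⊤ := by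
        rw [htop] at hch
        refine top_le_iff.1 (le_trans ?_ hch)
        simp
      refine le_trans le_top ?_
      have hVtop : Vtp Ω₀ = ⊤ := by
        refine top_le_iff.1 ?_
        rw [← this, hopt₁ Ω₀]
        exact f2 Ω₀
      rw [← hVtop]
      exact le_iSup₂_of_le Ω₀ hΩ₀p le_rfl

end TwoPhase
end

section
/- Let Π be the two-phase reach-avoid problem on transition system S = (X,U,F) with running cost g, associated with nonempty A₁, A₂ ⊆ X and G₀ : X → [0,∞], with total cost J. Let Π₂ be the reach-avoid problem associated with A₂ and G₀ with closed-loop performance L₂, μ₂ a memoryless controller, Π₁ the reach-avoid problem associated with A₁ and terminal cost L₂(·,μ₂) with closed-loop performance L₁, μ₁ a memoryless controller with single-valued stopping component, and μ the composed controller that applies μ₁ until its stopping signal first equals 1 and μ₂ thereafter. Then for every p ∈ X with L₁(p,μ₁) < ∞ and every (u,v,x) ∈ B_p(μ × S), it holds that J(u,v,x) ≤ L₁(p,μ₁). -/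
open scoped ENNReal Classical

namespace TwoPhase

section Aux

variable {X U : Type*}

lemma totalCost_le_perf (F : X → U → Set X) (g : X → X → U → ℝ≥0∞)
    (G : ℕ → (ℕ → X) → ℝ≥0∞) (μ : ℕ → (ℕ → X) → (ℕ → U) → Set (U × Bool))
    (p : X) (u : ℕ → U) (v : ℕ → Bool) (x : ℕ → X)
    (hcl : ClosedLoop F μ p u v x) :
    totalCost g G u v x ≤ perf F g G μ p :=
  le_iSup_of_le u <| le_iSup_of_le v <| le_iSup_of_le x <| le_iSup_of_le hcl le_rfl

lemma totalCost_eq (g : X → X → U → ℝ≥0∞) (G : ℕ → (ℕ → X) → ℝ≥0∞)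
    (u : ℕ → U) (v : ℕ → Bool) (x : ℕ → X)
    (h : ∃ t, v t = true) (T : ℕ) (hT : v T = true) (hmin : ∀ s < T, v s = false) :
    totalCost g G u v x =
      (∑ t ∈ Finset.range T, g (x t) (x (t + 1)) (u t)) + G T x := by
  have hfind : Nat.find h = T :=
    (Nat.find_eq_iff h).mpr ⟨hT, fun n hn => by simp [hmin n hn]⟩
  rw [totalCost, dif_pos h, hfind]

/-- Extension of a trajectory beyond time `T` by arbitrary choices. -/
noncomputable def extTraj (F : X → U → Set X) (hF : ∀ a b, (F a b).Nonempty)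
    (μ : X → Set (U × Bool)) (hμ : ∀ q, (μ q).Nonempty)
    (x : ℕ → X) (T : ℕ) : ℕ → X
  | 0 => x 0
  | t + 1 =>
    if t + 1 ≤ T then x (t + 1)
    else (hF (extTraj F hF μ hμ x T t) ((hμ (extTraj F hF μ hμ x T t)).choose.1)).choose

lemma extTraj_eq_of_le (F : X → U → Set X) (hF : ∀ a b, (F a b).Nonempty)
    (μ : X → Set (U × Bool)) (hμ : ∀ q, (μ q).Nonempty)
    (x : ℕ → X) (T : ℕ) : ∀ t ≤ T, extTraj F hF μ hμ x T t = x t := by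
  intro t ht
  cases t with
  | zero => rfl
  | succ s => rw [extTraj, if_pos ht]

end Aux

/-- first step of the proof of Proposition 1.  With `Π`,
`Π₁`, `Π₂`, `μ₁`, `μ₂` and the composed controller `μ` as in Proposition 1,
for every `p ∈ X` with `L₁(p,μ₁) < ∞` and every closed-loop signal
`(u,v,x) ∈ B_p(μ × S)` it holds that `J(u,v,x) ≤ L₁(p,μ₁)`. -/
theorem totalCost_le_of_closedLoop
    {X U : Type*} [Nonempty X] [Nonempty U]
    (F : X → U → Set X) (hF : ∀ x u, (F x u).Nonempty)
    (g : X → X → U → ℝ≥0∞) (G₀ : X → ℝ≥0∞)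
    (A₁ A₂ : Set X) (hA₁ : A₁.Nonempty) (hA₂ : A₂.Nonempty)
    (μ₂ : X → Set (U × Bool)) (hμ₂ : ∀ q, (μ₂ q).Nonempty)
    (μ₁ : X → Set (U × Bool)) (hμ₁ : ∀ q, (μ₁ q).Nonempty) (hsv : SVStop μ₁)
    (p : X)
    (hfin : perf F g
        (reachAvoidCost A₁
          (fun q => perf F g (reachAvoidCost A₂ G₀) (ofMemoryless μ₂) q))
        (ofMemoryless μ₁) p < ⊤)
    (u : ℕ → U) (v : ℕ → Bool) (x : ℕ → X)
    (hcl : ClosedLoop F (composed μ₁ μ₂) p u v x) :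
    totalCost g (twoPhaseCost A₁ A₂ G₀) u v x ≤
      perf F g
        (reachAvoidCost A₁
          (fun q => perf F g (reachAvoidCost A₂ G₀) (ofMemoryless μ₂) q))
        (ofMemoryless μ₁) p := by
  classical
  set L₂ : X → ℝ≥0∞ := fun q => perf F g (reachAvoidCost A₂ G₀) (ofMemoryless μ₂) q
    with hL₂def
  obtain ⟨⟨hx0, hxF⟩, hctrl⟩ := hcl
  by_cases hstop : ∃ t, ∃ w ∈ μ₁ (x t), w.2 = true
  · -- the stopping signal of μ₁ eventually fires at time T₁
    set T₁ := Nat.find hstop with hT₁def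
    have hT₁ : ∃ w ∈ μ₁ (x T₁), w.2 = true := Nat.find_spec hstop
    have hall_true : ∀ w ∈ μ₁ (x T₁), w.2 = true := by
      rcases hsv (x T₁) with h | h
      · obtain ⟨w, hw, hwt⟩ := hT₁
        rw [h w hw] at hwt; cases hwt
      · exact h
    have hbefore : ∀ s < T₁, ∀ w ∈ μ₁ (x s), w.2 = false := by
      intro s hs w hw
      rcases hsv (x s) with h | h
      · exact h w hw
      · exact absurd ⟨w, hw, h w hw⟩ (Nat.find_min hstop hs)
    have hCpos : ∀ t < T₁, ∀ s ≤ t, ∀ w ∈ μ₁ (x s), w.2 = false :=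
      fun t ht s hs => hbefore s (lt_of_le_of_lt hs ht)
    have hCneg : ∀ t, T₁ ≤ t → ¬(∀ s ≤ t, ∀ w ∈ μ₁ (x s), w.2 = false) := by
      intro t ht h
      obtain ⟨w, hw, hwt⟩ := hT₁
      rw [h T₁ ht w hw] at hwt; cases hwt
    have hμ1mem : ∀ t < T₁, (u t, v t) ∈ μ₁ (x t) := by
      intro t ht
      have h := hctrl t
      rw [composed, if_pos (hCpos t ht)] at h
      exact h
    have hvfalse : ∀ t < T₁, v t = false := fun t ht => hbefore t ht _ (hμ1mem t ht)
    have hμ2mem : ∀ t, T₁ ≤ t → (u t, v t) ∈ μ₂ (x t) := by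
      intro t ht
      have h := hctrl t
      rw [composed, if_neg (hCneg t ht)] at h
      exact h
    -- phase-1 closed-loop trajectory of μ₁
    set x₁ : ℕ → X := extTraj F hF μ₁ hμ₁ x T₁ with hx₁def
    have hx₁eq : ∀ t ≤ T₁, x₁ t = x t := extTraj_eq_of_le F hF μ₁ hμ₁ x T₁
    set c : ℕ → U × Bool := fun t => if t < T₁ then (u t, v t) else (hμ₁ (x₁ t)).choose
      with hcdef
    set u₁ : ℕ → U := fun t => (c t).1 with hu₁def
    set w₁ : ℕ → Bool := fun t => (c t).2 with hw₁def
    have hcmem : ∀ t, c t ∈ μ₁ (x₁ t) := by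
      intro t
      by_cases ht : t < T₁
      · rw [hcdef]; simp only [if_pos ht]
        rw [hx₁eq t ht.le]; exact hμ1mem t ht
      · rw [hcdef]; simp only [if_neg ht]
        exact (hμ₁ (x₁ t)).choose_spec
    have hw₁T₁ : w₁ T₁ = true := by
      have hm := hcmem T₁
      rw [hx₁eq T₁ le_rfl] at hm
      exact hall_true _ hm
    have hw₁lt : ∀ s < T₁, w₁ s = false := by
      intro s hs
      rw [hw₁def]; simp only [hcdef, if_pos hs]
      exact hvfalse s hs
    have hu₁lt : ∀ s < T₁, u₁ s = u s := by
      intro s hs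
      rw [hu₁def]; simp only [hcdef, if_pos hs]
    have hcl₁ : ClosedLoop F (ofMemoryless μ₁) p u₁ w₁ x₁ := by
      refine ⟨⟨by rw [hx₁eq 0 (Nat.zero_le _)]; exact hx0, fun t => ?_⟩, fun t => ?_⟩
      · by_cases ht : t + 1 ≤ T₁
        · rw [hx₁eq (t + 1) ht, hx₁eq t (le_trans (Nat.le_succ t) ht),
            hu₁lt t (Nat.lt_of_succ_le ht)]
          exact hxF t
        · have ht' : ¬ t < T₁ := fun h => ht (Nat.succ_le_of_lt h)
          have hu : u₁ t = (hμ₁ (x₁ t)).choose.1 := by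
            rw [hu₁def]; simp only [hcdef, if_neg ht']
          rw [hu, hx₁def, extTraj, if_neg ht]
          exact (hF _ _).choose_spec
      · exact hcmem t
    have hex₁ : ∃ t, w₁ t = true := ⟨T₁, hw₁T₁⟩
    have hle₁ := totalCost_le_perf F g (reachAvoidCost A₁ L₂) (ofMemoryless μ₁)
      p u₁ w₁ x₁ hcl₁
    rw [totalCost_eq g (reachAvoidCost A₁ L₂) u₁ w₁ x₁ hex₁ T₁ hw₁T₁ hw₁lt] at hle₁
    have hsum₁ : (∑ t ∈ Finset.range T₁, g (x₁ t) (x₁ (t + 1)) (u₁ t)) =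
        ∑ t ∈ Finset.range T₁, g (x t) (x (t + 1)) (u t) := by
      refine Finset.sum_congr rfl fun t ht => ?_
      have ht' : t < T₁ := Finset.mem_range.mp ht
      rw [hx₁eq t ht'.le, hx₁eq (t + 1) (Nat.succ_le_of_lt ht'), hu₁lt t ht']
    rw [hsum₁, reachAvoidCost, hx₁eq T₁ le_rfl] at hle₁
    -- deduce x T₁ ∈ A₁ and the key phase-1 bound
    have hmemA₁ : x T₁ ∈ A₁ := by
      by_contra h
      rw [if_neg h, add_top] at hle₁
      exact absurd hfin (not_lt.mpr hle₁)
    rw [if_pos hmemA₁] at hle₁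
    -- phase-2 closed-loop trajectory of μ₂
    have hcl₂ : ClosedLoop F (ofMemoryless μ₂) (x T₁)
        (fun t => u (t + T₁)) (fun t => v (t + T₁)) (fun t => x (t + T₁)) := by
      refine ⟨⟨by simp, fun t => ?_⟩, fun t => ?_⟩
      · show x (t + 1 + T₁) ∈ F (x (t + T₁)) (u (t + T₁))
        rw [Nat.add_right_comm]
        exact hxF (t + T₁)
      · exact hμ2mem (t + T₁) (Nat.le_add_left _ _)
    have hle₂ := totalCost_le_perf F g (reachAvoidCost A₂ G₀) (ofMemoryless μ₂)
      (x T₁) (fun t => u (t + T₁)) (fun t => v (t + T₁)) (fun t => x (t + T₁)) hcl₂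
    by_cases hv : ∃ t, v t = true
    · -- the composed stopping time T
      set T := Nat.find hv with hTdef
      have hvT : v T = true := Nat.find_spec hv
      have hT₁leT : T₁ ≤ T := by
        by_contra h
        push_neg at h
        rw [hvfalse T h] at hvT; cases hvT
      have hv₂ : ∃ t, (fun t => v (t + T₁)) t = true :=
        ⟨T - T₁, by simpa [Nat.sub_add_cancel hT₁leT] using hvT⟩
      have hv₂T : (fun t => v (t + T₁)) (T - T₁) = true := by
        simpa [Nat.sub_add_cancel hT₁leT] using hvT
      have hv₂min : ∀ s < T - T₁, (fun t => v (t + T₁)) s = false := by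
        intro s hs
        have hlt : s + T₁ < T := by omega
        have := Nat.find_min hv hlt
        simpa using this
      rw [totalCost_eq g (reachAvoidCost A₂ G₀) _ _ _ hv₂ (T - T₁) hv₂T hv₂min] at hle₂
      have hvmin : ∀ s < T, v s = false := fun s hs => by
        have := Nat.find_min hv hs; simpa using this
      rw [totalCost_eq g (twoPhaseCost A₁ A₂ G₀) u v x hv T hvT hvmin]
      have hTsplit : T = T₁ + (T - T₁) := by omega
      have hsumsplit : (∑ t ∈ Finset.range T, g (x t) (x (t + 1)) (u t)) =
          (∑ t ∈ Finset.range T₁, g (x t) (x (t + 1)) (u t)) +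
            ∑ t ∈ Finset.range (T - T₁), g (x (t + T₁)) (x (t + 1 + T₁)) (u (t + T₁)) := by
        conv_lhs => rw [hTsplit]
        rw [Finset.sum_range_add]
        congr 1
        refine Finset.sum_congr rfl fun t _ => ?_
        rw [show T₁ + t + 1 = t + 1 + T₁ from by omega, Nat.add_comm T₁ t]
      have hG : twoPhaseCost A₁ A₂ G₀ T x =
          reachAvoidCost A₂ G₀ (T - T₁) (fun t => x (t + T₁)) := by
        rw [twoPhaseCost, reachAvoidCost,
          show T - T₁ + T₁ = T from Nat.sub_add_cancel hT₁leT]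
        by_cases hA2 : x T ∈ A₂
        · rw [if_pos hA2, if_pos ⟨⟨T₁, hT₁leT, hmemA₁⟩, hA2⟩]
        · rw [if_neg hA2, if_neg (fun h => hA2 h.2)]
      calc (∑ t ∈ Finset.range T, g (x t) (x (t + 1)) (u t)) + twoPhaseCost A₁ A₂ G₀ T x
          = (∑ t ∈ Finset.range T₁, g (x t) (x (t + 1)) (u t)) +
            ((∑ t ∈ Finset.range (T - T₁),
                g ((fun t => x (t + T₁)) t) ((fun t => x (t + T₁)) (t + 1))
                  ((fun t => u (t + T₁)) t)) +
              reachAvoidCost A₂ G₀ (T - T₁) (fun t => x (t + T₁))) := by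
            rw [hsumsplit, hG, add_assoc]
        _ ≤ (∑ t ∈ Finset.range T₁, g (x t) (x (t + 1)) (u t)) + L₂ (x T₁) :=
            add_le_add le_rfl hle₂
        _ ≤ _ := hle₁
    · -- v never fires: contradiction with finiteness
      exfalso
      have hv₂ : ¬ ∃ t, (fun t => v (t + T₁)) t = true := by
        rintro ⟨t, ht⟩
        exact hv ⟨t + T₁, ht⟩
      rw [totalCost, dif_neg hv₂, top_le_iff] at hle₂
      have hL₂top : L₂ (x T₁) = ⊤ := hle₂
      rw [hL₂top, add_top] at hle₁
      exact absurd hfin (not_lt.mpr hle₁)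
  · -- μ₁ never stops: contradiction with finiteness
    exfalso
    push_neg at hstop
    have hfalse : ∀ t, ∀ w ∈ μ₁ (x t), w.2 = false := by
      intro t w hw
      rcases hsv (x t) with h | h
      · exact h w hw
      · exact absurd (h w hw) (hstop t w hw)
    have hμ1mem : ∀ t, (u t, v t) ∈ μ₁ (x t) := by
      intro t
      have h := hctrl t
      rw [composed, if_pos (fun s _ => hfalse s)] at h
      exact h
    have hcl₁ : ClosedLoop F (ofMemoryless μ₁) p u v x :=
      ⟨⟨hx0, hxF⟩, fun t => hμ1mem t⟩
    have hle₁ := totalCost_le_perf F g (reachAvoidCost A₁ L₂) (ofMemoryless μ₁)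
      p u v x hcl₁
    have hnv : ¬ ∃ t, v t = true := by
      rintro ⟨t, ht⟩
      have h : v t = false := hfalse t _ (hμ1mem t)
      rw [h] at ht; cases ht
    rw [totalCost, dif_neg hnv, top_le_iff] at hle₁
    rw [hle₁] at hfin
    exact absurd hfin (lt_irrefl _)

end TwoPhase
end
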